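/- For the polynomials p(x) = 40x⁴ - 30x² + 2 and q(x) = 75x⁹ - 150x⁷ + 88x⁵ - 10x³ - 3x, there do not exist polynomials w, p₁, q₁ ∈ ℝ[x] with w(-1) = w(1) such that p̃ = p₁ ∘ w and q̃ = q₁ ∘ w, where p̃(x) = ∫_{-1}^x p and q̃(x) = ∫_{-1}^x q. -/

import Mathlib

open MeasureTheory

noncomputable def p (x : ℝ) : ℝ := 40*x^4 - 30*x^2 + 2
noncomputable def q (x : ℝ) : ℝ := 75*x^9 - 150*x^7 + 88*x^5 - 10*x^3 - 3*x

/-- The explicit antiderivative of `p` vanishing at `-1`. -/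
noncomputable def Ptilde : Polynomial ℝ :=
  Polynomial.C 8 * Polynomial.X^5 - Polynomial.C 10 * Polynomial.X^3 + Polynomial.C 2 * Polynomial.X

lemma Ptilde_natDegree : Ptilde.natDegree = 5 := by
  unfold Ptilde; compute_degree!

lemma Ptilde_eval (x : ℝ) : Ptilde.eval x = 8*x^5 - 10*x^3 + 2*x := by
  simp [Ptilde]

lemma integral_p (x : ℝ) : (∫ σ in (-1:ℝ)..x, p σ) = 8*x^5 - 10*x^3 + 2*x := by
  have h1 : IntervalIntegrable (fun σ:ℝ => 40*σ^4) volume (-1) x :=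
    ((continuous_const.mul (continuous_pow 4)).intervalIntegrable _ _)
  have h2 : IntervalIntegrable (fun σ:ℝ => 30*σ^2) volume (-1) x :=
    ((continuous_const.mul (continuous_pow 2)).intervalIntegrable _ _)
  have h3 : IntervalIntegrable (fun σ:ℝ => (2:ℝ)) volume (-1) x :=
    (continuous_const.intervalIntegrable _ _)
  simp only [p]
  rw [intervalIntegral.integral_add (h1.sub h2) h3, intervalIntegral.integral_sub h1 h2,
    intervalIntegral.integral_const_mul, intervalIntegral.integral_const_mul,
    integral_pow, integral_pow, intervalIntegral.integral_const, smul_eq_mul]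
  push_cast
  ring

lemma integral_q (x : ℝ) : (∫ σ in (-1:ℝ)..x, q σ) =
    (15/2)*x^10 - (75/4)*x^8 + (44/3)*x^6 - (5/2)*x^4 - (3/2)*x^2 + 7/12 := by
  have h9 : IntervalIntegrable (fun σ:ℝ => 75*σ^9) volume (-1) x :=
    ((continuous_const.mul (continuous_pow 9)).intervalIntegrable _ _)
  have h7 : IntervalIntegrable (fun σ:ℝ => 150*σ^7) volume (-1) x :=
    ((continuous_const.mul (continuous_pow 7)).intervalIntegrable _ _)
  have h5 : IntervalIntegrable (fun σ:ℝ => 88*σ^5) volume (-1) x :=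
    ((continuous_const.mul (continuous_pow 5)).intervalIntegrable _ _)
  have h3 : IntervalIntegrable (fun σ:ℝ => 10*σ^3) volume (-1) x :=
    ((continuous_const.mul (continuous_pow 3)).intervalIntegrable _ _)
  have h1 : IntervalIntegrable (fun σ:ℝ => 3*σ) volume (-1) x :=
    ((continuous_const.mul continuous_id).intervalIntegrable _ _)
  simp only [q]
  rw [intervalIntegral.integral_sub (((h9.sub h7).add h5).sub h3) h1,
    intervalIntegral.integral_sub ((h9.sub h7).add h5) h3,
    intervalIntegral.integral_add (h9.sub h7) h5,
    intervalIntegral.integral_sub h9 h7,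
    intervalIntegral.integral_const_mul, intervalIntegral.integral_const_mul,
    intervalIntegral.integral_const_mul, intervalIntegral.integral_const_mul,
    intervalIntegral.integral_const_mul,
    integral_pow, integral_pow, integral_pow, integral_pow, integral_id]
  push_cast
  ring

theorem no_composition_condition :
    ¬ ∃ (w p₁ q₁ : Polynomial ℝ),
      w.eval (-1) = w.eval 1 ∧
      (∀ x : ℝ, (∫ σ in (-1:ℝ)..x, p σ) = p₁.eval (w.eval x)) ∧
      (∀ x : ℝ, (∫ σ in (-1:ℝ)..x, q σ) = q₁.eval (w.eval x)) := by
  rintro ⟨w, p₁, q₁, hw, hp, hq⟩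
  -- the integral of p is the explicit polynomial Ptilde
  have hp' : ∀ x : ℝ, p₁.eval (w.eval x) = Ptilde.eval x := by
    intro x
    rw [← hp x, integral_p, Ptilde_eval]
  -- so p₁ ∘ w = Ptilde as polynomials
  have hcomp : p₁.comp w = Ptilde := by
    apply Polynomial.funext
    intro r
    rw [Polynomial.eval_comp, hp' r]
  -- degree equation: natDegree p₁ * natDegree w = 5
  have hdeg : p₁.natDegree * w.natDegree = 5 := by
    rw [← Polynomial.natDegree_comp, hcomp, Ptilde_natDegree]
  have hdvd : w.natDegree ∣ 5 := Dvd.intro_left _ hdeg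
  have h5 : Nat.Prime 5 := by norm_num
  rcases (Nat.Prime.eq_one_or_self_of_dvd h5 _ hdvd) with h1 | h5'
  · -- w has degree 1 : contradicts w(-1) = w(1)
    have hne : w ≠ 0 := by intro h0; rw [h0] at h1; simp at h1
    have hrep := Polynomial.eq_X_add_C_of_natDegree_le_one (le_of_eq h1)
    have hl : w.coeff 1 ≠ 0 := by
      have h2 : w.coeff w.natDegree ≠ 0 := by
        rw [Polynomial.coeff_natDegree]; exact Polynomial.leadingCoeff_ne_zero.mpr hne
      rwa [h1] at h2
    rw [hrep] at hw
    simp at hw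
    exact hl (by linarith)
  · -- w has degree 5, so p₁ has degree 1
    have hp1 : p₁.natDegree = 1 := by
      rw [h5'] at hdeg
      omega
    -- p₁ is affine: eval is a*t+b with a ≠ 0
    set a := p₁.coeff 1 with ha
    set b := p₁.coeff 0 with hb
    have haff : ∀ x : ℝ, p₁.eval (w.eval x) = a * w.eval x + b := by
      intro x
      conv_lhs => rw [Polynomial.eq_X_add_C_of_natDegree_le_one (le_of_eq hp1)]
      simp [ha, hb]
    have hane : a ≠ 0 := by
      have h2 : p₁.coeff p₁.natDegree ≠ 0 := by
        rw [Polynomial.coeff_natDegree]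
        exact Polynomial.leadingCoeff_ne_zero.mpr (by intro h0; rw [h0] at hp1; simp at hp1)
      rwa [hp1] at h2
    -- Ptilde vanishes at 0 and 1, so w(0) = w(1)
    have e0 : a * w.eval 0 + b = 0 := by
      rw [← haff 0, hp' 0, Ptilde_eval]; norm_num
    have e1 : a * w.eval 1 + b = 0 := by
      rw [← haff 1, hp' 1, Ptilde_eval]; norm_num
    have hw01 : w.eval 0 = w.eval 1 := by
      have : a * w.eval 0 = a * w.eval 1 := by linarith
      exact mul_left_cancel₀ hane this
    -- but then the integral of q at 0 and 1 would coincide, which is false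
    have hq0 := hq 0
    have hq1 := hq 1
    rw [integral_q] at hq0 hq1
    rw [hw01] at hq0
    rw [← hq1] at hq0
    norm_num at hq0
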